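/- Evolution of the backward heat kernel along a curve moving by curvature with tangential velocity: Let 0 < t₀ ≤ T, p₀ ∈ ℝ², and define ρ(t,p) := (4π(t₀−t))^{−1/2} exp(−‖p−p₀‖²/(4(t₀−t))) for t < t₀. Let γ : [0,T) × [0,1] → ℝ² be smooth with ∂ₓγ(t,x) ≠ 0 everywhere, evolving by ∂ₜγ = k + λτ for a smooth function λ, where τ = ∂ₓγ/‖∂ₓγ‖, ν = Rτ, ∂ₛ = ‖∂ₓγ‖⁻¹∂ₓ and k = ∂ₛτ. Then for every t ∈ [0,t₀) and x ∈ [0,1]: ∂ₜ(ρ(t,γ(t,x))) = −∂ₛ²(ρ∘γ) + ( −⟨γ−p₀, k⟩/(t₀−t) − ⟨γ−p₀, ν⟩²/(4(t₀−t)²) )·(ρ∘γ) − (λ/(2(t₀−t)))·⟨γ−p₀, τ⟩·(ρ∘γ), where (ρ∘γ)(t,x) := ρ(t,γ(t,x)). -/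

import Mathlib

open scoped RealInnerProductSpace

/-- The point of `ℝ²` (as `EuclideanSpace ℝ (Fin 2)`) with coordinates `a`, `b`. -/
noncomputable def vec2 (a b : ℝ) : EuclideanSpace ℝ (Fin 2) :=
  (WithLp.equiv 2 (Fin 2 → ℝ)).symm ![a, b]

/-- Counterclockwise rotation by `π/2` in `ℝ²`: `R(a,b) = (−b,a)`. -/
noncomputable def Rot (v : EuclideanSpace ℝ (Fin 2)) : EuclideanSpace ℝ (Fin 2) :=
  vec2 (-(v 1)) (v 0)

/-- The space derivative `∂ₓγ` of a time-dependent curve. -/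
noncomputable def pX (γ : ℝ → ℝ → EuclideanSpace ℝ (Fin 2)) (t x : ℝ) :
    EuclideanSpace ℝ (Fin 2) :=
  deriv (γ t) x

/-- The unit tangent `τ = ∂ₓγ/‖∂ₓγ‖` of a time-dependent curve. -/
noncomputable def utang (γ : ℝ → ℝ → EuclideanSpace ℝ (Fin 2)) (t x : ℝ) :
    EuclideanSpace ℝ (Fin 2) :=
  ‖pX γ t x‖⁻¹ • pX γ t x

/-- The unit normal `ν = Rτ` of a time-dependent curve. -/
noncomputable def unorm (γ : ℝ → ℝ → EuclideanSpace ℝ (Fin 2)) (t x : ℝ) :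
    EuclideanSpace ℝ (Fin 2) :=
  Rot (utang γ t x)

/-- The arclength derivative `∂ₛh = ‖∂ₓγ‖⁻¹ ∂ₓh` of a scalar quantity along a time-dependent
curve. -/
noncomputable def sderiv (γ : ℝ → ℝ → EuclideanSpace ℝ (Fin 2)) (h : ℝ → ℝ → ℝ) (t x : ℝ) : ℝ :=
  ‖pX γ t x‖⁻¹ * deriv (h t) x

/-- The arclength derivative `∂ₛh = ‖∂ₓγ‖⁻¹ ∂ₓh` of a vector quantity along a time-dependent
curve. -/
noncomputable def sderivV (γ h : ℝ → ℝ → EuclideanSpace ℝ (Fin 2)) (t x : ℝ) :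
    EuclideanSpace ℝ (Fin 2) :=
  ‖pX γ t x‖⁻¹ • deriv (h t) x

/-- The curvature vector `k = ∂ₛτ` of a time-dependent curve. -/
noncomputable def curv (γ : ℝ → ℝ → EuclideanSpace ℝ (Fin 2)) (t x : ℝ) :
    EuclideanSpace ℝ (Fin 2) :=
  sderivV γ (utang γ) t x

/-- The one-dimensional backward heat kernel centered at `(t₀, p₀)`:
`ρ(t,p) = (4π(t₀−t))^{−1/2} exp(−‖p−p₀‖²/(4(t₀−t)))`. -/
noncomputable def backHeat (t₀ : ℝ) (p₀ : EuclideanSpace ℝ (Fin 2)) (t : ℝ)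
    (p : EuclideanSpace ℝ (Fin 2)) : ℝ :=
  (Real.sqrt (4 * Real.pi * (t₀ - t)))⁻¹ * Real.exp (-‖p - p₀‖ ^ 2 / (4 * (t₀ - t)))

/-- Pythagoras in `ℝ²` for the orthonormal pair `τ, Rot τ`. -/
lemma pyth_aux (a τ : EuclideanSpace ℝ (Fin 2)) (hτ : ‖τ‖ = 1) :
    ⟪a, τ⟫ ^ 2 + ⟪a, Rot τ⟫ ^ 2 = ‖a‖ ^ 2 := by
  have h1 : (⟪τ, τ⟫ : ℝ) = 1 := by rw [real_inner_self_eq_norm_sq, hτ]; norm_num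
  have ha : ‖a‖ ^ 2 = ⟪a, a⟫ := (real_inner_self_eq_norm_sq a).symm
  simp only [PiLp.inner_apply, RCLike.inner_apply, starRingEnd_apply, star_trivial,
    Fin.sum_univ_two, Rot, vec2, WithLp.equiv_symm_apply, PiLp.toLp_apply, Matrix.cons_val_zero,
    Matrix.cons_val_one, Matrix.head_cons] at h1 ha ⊢
  rw [ha]; nlinarith [h1]

/-- Spatial derivative of the backward heat kernel along a curve. -/
lemma hasDerivAt_bh_space_aux (t₀ : ℝ) (p₀ : EuclideanSpace ℝ (Fin 2)) (t : ℝ) (ht : t < t₀)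
    {g : ℝ → EuclideanSpace ℝ (Fin 2)} {g' : EuclideanSpace ℝ (Fin 2)} {y : ℝ}
    (hg : HasDerivAt g g' y) :
    HasDerivAt (fun z => backHeat t₀ p₀ t (g z))
      (-(⟪g y - p₀, g'⟫ / (2 * (t₀ - t))) * backHeat t₀ p₀ t (g y)) y := by
  have hσ : (0:ℝ) < t₀ - t := by linarith
  have hG : HasDerivAt (fun z => g z - p₀) g' y := hg.sub_const p₀
  have hq := (hG.inner ℝ hG)
  have h2 : HasDerivAt (fun z => -⟪g z - p₀, g z - p₀⟫ / (4 * (t₀ - t)))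
      (-(⟪g y - p₀, g'⟫ + ⟪g', g y - p₀⟫) / (4 * (t₀ - t))) y := (hq.neg).div_const _
  have h3 := h2.exp
  have h4 := h3.const_mul (Real.sqrt (4 * Real.pi * (t₀ - t)))⁻¹
  have heq : (fun z => backHeat t₀ p₀ t (g z))
      = fun z => (Real.sqrt (4 * Real.pi * (t₀ - t)))⁻¹ *
          Real.exp (-⟪g z - p₀, g z - p₀⟫ / (4 * (t₀ - t))) := by
    funext z; rw [backHeat, real_inner_self_eq_norm_sq]
  rw [heq]
  refine h4.congr_deriv ?_
  symm
  rw [backHeat, real_inner_self_eq_norm_sq, real_inner_comm (g' ) (g y - p₀)]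
  have h5 : t₀ - t ≠ 0 := ne_of_gt hσ
  field_simp
  ring

lemma alg_time_aux (pi σ S q iv Ex : ℝ) (hσ : 0 < σ) (hS : 0 < S) (hS2 : S ^ 2 = 4 * pi * σ) :
    (1 / (2 * σ) - q / (4 * σ ^ 2) - iv / (2 * σ)) * (S⁻¹ * Ex)
      = -(-(4 * pi) / (2 * S)) / S ^ 2 * Ex
        + S⁻¹ * (Ex * ((-(iv + iv) * (4 * σ) - -q * (-4)) / (4 * σ) ^ 2)) := by
  have h1 : S ≠ 0 := hS.ne'
  have h2 : σ ≠ 0 := hσ.ne'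
  have hpi : pi = S ^ 2 / (4 * σ) := by field_simp; linarith [hS2]
  rw [hpi]; field_simp; ring

/-- Time derivative of the backward heat kernel along a moving point. -/
lemma hasDerivAt_bh_time_aux (t₀ : ℝ) (p₀ : EuclideanSpace ℝ (Fin 2)) (t : ℝ) (ht : t < t₀)
    {g : ℝ → EuclideanSpace ℝ (Fin 2)} {v : EuclideanSpace ℝ (Fin 2)}
    (hg : HasDerivAt g v t) :
    HasDerivAt (fun s => backHeat t₀ p₀ s (g s))
      ((1 / (2 * (t₀ - t)) - ‖g t - p₀‖ ^ 2 / (4 * (t₀ - t) ^ 2)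
          - ⟪g t - p₀, v⟫ / (2 * (t₀ - t))) * backHeat t₀ p₀ t (g t)) t := by
  have hσ : (0:ℝ) < t₀ - t := by linarith
  have hπ : (0:ℝ) < Real.pi := Real.pi_pos
  have hA : (0:ℝ) < 4 * Real.pi * (t₀ - t) := by positivity
  set S := Real.sqrt (4 * Real.pi * (t₀ - t)) with hSdef
  have hSpos : 0 < S := Real.sqrt_pos.mpr hA
  have hS2 : S ^ 2 = 4 * Real.pi * (t₀ - t) := Real.sq_sqrt hA.le
  have hlin : HasDerivAt (fun s => 4 * Real.pi * (t₀ - s)) (-(4 * Real.pi)) t := by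
    simpa using ((hasDerivAt_const t t₀).sub (hasDerivAt_id t)).const_mul (4 * Real.pi)
  have hsqrt : HasDerivAt (fun s => Real.sqrt (4 * Real.pi * (t₀ - s)))
      (-(4 * Real.pi) / (2 * S)) t := hlin.sqrt hA.ne'
  have hc : HasDerivAt (fun s => (Real.sqrt (4 * Real.pi * (t₀ - s)))⁻¹)
      (-(-(4 * Real.pi) / (2 * S)) / S ^ 2) t := hsqrt.inv hSpos.ne'
  have hG : HasDerivAt (fun s => g s - p₀) v t := hg.sub_const p₀
  have hq := hG.inner ℝ hG
  have hden : HasDerivAt (fun s => 4 * (t₀ - s)) (-4 : ℝ) t := by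
    simpa using ((hasDerivAt_const t t₀).sub (hasDerivAt_id t)).const_mul (4:ℝ)
  have hdiv := (hq.neg).div hden (by positivity : 4 * (t₀ - t) ≠ 0)
  have hexp := hdiv.exp
  have hF := hc.mul hexp
  have heq : (fun s => backHeat t₀ p₀ s (g s))
      = fun s => (Real.sqrt (4 * Real.pi * (t₀ - s)))⁻¹ *
          Real.exp (-⟪g s - p₀, g s - p₀⟫ / (4 * (t₀ - s))) := by
    funext s; rw [backHeat, real_inner_self_eq_norm_sq]
  rw [heq]
  refine hF.congr_deriv ?_
  symm
  simp only [Pi.div_apply, Pi.neg_apply]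
  rw [backHeat, real_inner_self_eq_norm_sq, real_inner_comm (v) (g t - p₀)]
  rw [← hSdef]
  exact alg_time_aux Real.pi (t₀ - t) S (‖g t - p₀‖ ^ 2) ⟪v, g t - p₀⟫
    (Real.exp (-‖g t - p₀‖ ^ 2 / (4 * (t₀ - t)))) hσ hSpos hS2

/-- **Evolution of the backward heat kernel along a curve moving by curvature with tangential
velocity**: for a smooth regular curve evolving by `∂ₜγ = k + λτ`, and `t ∈ [0,t₀)`, `x ∈ [0,1]`,
`∂ₜ(ρ∘γ) = −∂ₛ²(ρ∘γ) + (−⟨γ−p₀,k⟩/(t₀−t) − ⟨γ−p₀,ν⟩²/(4(t₀−t)²))(ρ∘γ)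
 − (λ/(2(t₀−t)))⟨γ−p₀,τ⟩(ρ∘γ)`. -/
theorem stmt14 (T t₀ : ℝ) (ht₀ : 0 < t₀) (ht₀T : t₀ ≤ T) (p₀ : EuclideanSpace ℝ (Fin 2))
    (γ : ℝ → ℝ → EuclideanSpace ℝ (Fin 2)) (lam : ℝ → ℝ → ℝ)
    (hγ : ContDiff ℝ (⊤ : ℕ∞) (Function.uncurry γ))
    (hlam : ContDiff ℝ (⊤ : ℕ∞) (Function.uncurry lam))
    (hreg : ∀ t x : ℝ, pX γ t x ≠ 0)
    (hflow : ∀ t ∈ Set.Ico (0 : ℝ) T, ∀ x ∈ Set.Icc (0 : ℝ) 1,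
      deriv (fun s => γ s x) t = curv γ t x + lam t x • utang γ t x) :
    ∀ t ∈ Set.Ico (0 : ℝ) t₀, ∀ x ∈ Set.Icc (0 : ℝ) 1,
      deriv (fun s => backHeat t₀ p₀ s (γ s x)) t
        = - sderiv γ (fun s y => sderiv γ (fun s' y' => backHeat t₀ p₀ s' (γ s' y')) s y) t x
          + (-(⟪γ t x - p₀, curv γ t x⟫ / (t₀ - t))
                - ⟪γ t x - p₀, unorm γ t x⟫ ^ 2 / (4 * (t₀ - t) ^ 2))
              * backHeat t₀ p₀ t (γ t x)
          - lam t x / (2 * (t₀ - t)) * ⟪γ t x - p₀, utang γ t x⟫ * backHeat t₀ p₀ t (γ t x) := by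
  intro t ht x hx
  obtain ⟨ht0, htt0⟩ := ht
  have hσ : (0:ℝ) < t₀ - t := by linarith
  have hσne : t₀ - t ≠ 0 := hσ.ne'
  have hle : ((⊤ : ℕ∞) : WithTop ℕ∞) ≠ 0 := by simp
  -- smoothness of slices
  have hγt : ContDiff ℝ (⊤ : ℕ∞) (γ t) := hγ.comp (contDiff_const.prodMk contDiff_id)
  have hγx : ContDiff ℝ (⊤ : ℕ∞) (fun s => γ s x) := hγ.comp (contDiff_id.prodMk contDiff_const)
  have hpXsm : ContDiff ℝ (⊤ : ℕ∞) (fun y => pX γ t y) := by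
    have h := (contDiff_infty_iff_deriv.mp hγt).2
    exact h
  -- basic derivative facts
  have hw : ∀ y : ℝ, HasDerivAt (γ t) (pX γ t y) y := fun y =>
    (hγt.differentiable hle y).hasDerivAt
  have hU : ∀ y : ℝ, HasDerivAt (fun z => backHeat t₀ p₀ t (γ t z))
      (-(⟪γ t y - p₀, pX γ t y⟫ / (2 * (t₀ - t))) * backHeat t₀ p₀ t (γ t y)) y := fun y =>
    hasDerivAt_bh_space_aux t₀ p₀ t htt0 (hw y)
  -- notation
  set n : ℝ := ‖pX γ t x‖ with hn
  have hnpos : 0 < n := norm_pos_iff.mpr (hreg t x)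
  have hnne : n ≠ 0 := hnpos.ne'
  -- the inner arclength derivative as a nice function of y
  have hinner : (fun y => sderiv γ (fun s' y' => backHeat t₀ p₀ s' (γ s' y')) t y)
      = fun y => -(⟪γ t y - p₀, utang γ t y⟫ / (2 * (t₀ - t))) * backHeat t₀ p₀ t (γ t y) := by
    funext y
    rw [sderiv, (hU y).deriv, utang, real_inner_smul_right]
    ring
  -- differentiability of the unit tangent
  have hwd : DifferentiableAt ℝ (fun y => pX γ t y) x := hpXsm.differentiable hle x
  have hnd : DifferentiableAt ℝ (fun y => ‖pX γ t y‖) x :=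
    DifferentiableAt.norm ℝ hwd (hreg t x)
  have hninv : DifferentiableAt ℝ (fun y => ‖pX γ t y‖⁻¹) x :=
    hnd.inv (norm_ne_zero_iff.mpr (hreg t x))
  have hτd : DifferentiableAt ℝ (utang γ t) x := by
    have : DifferentiableAt ℝ (fun y => ‖pX γ t y‖⁻¹ • pX γ t y) x := hninv.smul hwd
    exact this
  have hτ' : HasDerivAt (utang γ t) (deriv (utang γ t) x) x := hτd.hasDerivAt
  have hGx : HasDerivAt (fun y => γ t y - p₀) (pX γ t x) x := (hw x).sub_const p₀
  have hip : HasDerivAt (fun y => ⟪γ t y - p₀, utang γ t y⟫)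
      (⟪γ t x - p₀, deriv (utang γ t) x⟫ + ⟪pX γ t x, utang γ t x⟫) x := hGx.inner ℝ hτ'
  have h1 : HasDerivAt (fun y => -(⟪γ t y - p₀, utang γ t y⟫ / (2 * (t₀ - t))))
      (-((⟪γ t x - p₀, deriv (utang γ t) x⟫ + ⟪pX γ t x, utang γ t x⟫) / (2 * (t₀ - t)))) x :=
    (hip.div_const _).neg
  have h2 := h1.mul (hU x)
  -- value of the second arclength derivative
  have hs2 : sderiv γ (fun s y => sderiv γ (fun s' y' => backHeat t₀ p₀ s' (γ s' y')) s y) t x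
      = n⁻¹ * (-((⟪γ t x - p₀, deriv (utang γ t) x⟫ + ⟪pX γ t x, utang γ t x⟫) / (2 * (t₀ - t)))
              * backHeat t₀ p₀ t (γ t x)
            + -(⟪γ t x - p₀, utang γ t x⟫ / (2 * (t₀ - t)))
              * (-(⟪γ t x - p₀, pX γ t x⟫ / (2 * (t₀ - t))) * backHeat t₀ p₀ t (γ t x))) := by
    rw [sderiv]
    congr 1
    rw [show (fun y => sderiv γ (fun s' y' => backHeat t₀ p₀ s' (γ s' y')) t y)
          = fun y => -(⟪γ t y - p₀, utang γ t y⟫ / (2 * (t₀ - t))) * backHeat t₀ p₀ t (γ t y)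
        from hinner]
    exact h2.deriv
  -- simplification identities
  have hwτ : ⟪pX γ t x, utang γ t x⟫ = n := by
    rw [utang, real_inner_smul_right, real_inner_self_eq_norm_sq, ← hn]
    field_simp
  have hGτ : ⟪γ t x - p₀, pX γ t x⟫ = n * ⟪γ t x - p₀, utang γ t x⟫ := by
    rw [utang, real_inner_smul_right, ← hn]
    field_simp
  have hGk : ⟪γ t x - p₀, deriv (utang γ t) x⟫ = n * ⟪γ t x - p₀, curv γ t x⟫ := by
    rw [curv, sderivV, real_inner_smul_right, ← hn]
    field_simp
  -- unit tangent has norm 1, Pythagoras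
  have hτ1 : ‖utang γ t x‖ = 1 := by
    rw [utang, norm_smul, norm_inv, norm_norm, ← hn, inv_mul_cancel₀ hnne]
  have hpyth : ⟪γ t x - p₀, utang γ t x⟫ ^ 2 + ⟪γ t x - p₀, unorm γ t x⟫ ^ 2
      = ‖γ t x - p₀‖ ^ 2 := by
    rw [unorm]; exact pyth_aux _ _ hτ1
  -- time derivative
  have hv : HasDerivAt (fun s => γ s x) (deriv (fun s => γ s x) t) t :=
    (hγx.differentiable hle t).hasDerivAt
  have hT := hasDerivAt_bh_time_aux t₀ p₀ t htt0 hv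
  have hLHS := hT.deriv
  rw [hflow t ⟨ht0, lt_of_lt_of_le htt0 ht₀T⟩ x hx] at hLHS
  have hGv : ⟪γ t x - p₀, curv γ t x + lam t x • utang γ t x⟫
      = ⟪γ t x - p₀, curv γ t x⟫ + lam t x * ⟪γ t x - p₀, utang γ t x⟫ := by
    rw [inner_add_right, real_inner_smul_right]
  rw [hLHS, hGv, hs2, hwτ, hGτ, hGk, ← hpyth]
  set A := (⟪γ t x - p₀, utang γ t x⟫ : ℝ)
  set B := (⟪γ t x - p₀, unorm γ t x⟫ : ℝ)
  set K := (⟪γ t x - p₀, curv γ t x⟫ : ℝ)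
  set u := backHeat t₀ p₀ t (γ t x)
  field_simp
  ring
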